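/- Let μ be a Borel probability measure on [0,1]^d and H := L²(μ). Let K := {f ∈ H : f agrees μ-a.e. with a real-valued convex function on [0,1]^d}, so that −K is the corresponding set for concave functions, and let A := {f ∈ H : f agrees μ-a.e. with an affine function on [0,1]^d}. Assume K is closed in H (K is a convex cone containing A). Let φ₀ ∈ H, and let φ_I and φ_D be the metric projections of φ₀ onto K and onto −K, respectively. If φ_I ∈ A and φ_D ∈ A, then φ₀ ∈ A. Equivalently, if φ₀ is not μ-a.e. equal to an affine function, then at least one of the projections φ_I, φ_D is not μ-a.e. equal to an affine function. -/

import Mathlib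

open MeasureTheory
open scoped BigOperators RealInnerProductSpace BoundedContinuousFunction

lemma aff_convexOn {d : ℕ} (a : ℝ) (b : Fin d → ℝ) {s : Set (Fin d → ℝ)} (hs : Convex ℝ s) :
    ConvexOn ℝ s (fun x => a + ∑ i, b i * x i) := by
  refine ⟨hs, fun x _ y _ p q hp hq hpq => le_of_eq ?_⟩
  simp only [Pi.add_apply, Pi.smul_apply, smul_eq_mul]
  have h1 : ∀ i ∈ Finset.univ, b i * (p * x i + q * y i)
      = p * (b i * x i) + q * (b i * y i) := fun i _ => by ring
  rw [Finset.sum_congr rfl h1, Finset.sum_add_distrib, ← Finset.mul_sum, ← Finset.mul_sum]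
  linear_combination (-a) * hpq

lemma exp_lin_convexOn {d : ℕ} (c : Fin d → ℝ) {s : Set (Fin d → ℝ)} (hs : Convex ℝ s) :
    ConvexOn ℝ s (fun x => Real.exp (∑ i, c i * x i)) := by
  have hl : IsLinearMap ℝ (fun x : Fin d → ℝ => ∑ i, c i * x i) := by
    constructor
    · intro x y; simp [mul_add, Finset.sum_add_distrib]
    · intro r x; simp [Finset.mul_sum]; ring_nf; simp [mul_comm, mul_left_comm]
  have h := (convexOn_exp).comp_affineMap (hl.mk' _).toAffineMap
  rw [Set.preimage_univ] at h
  exact h.subset (Set.subset_univ s) hs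

lemma var_ineq {H : Type*} [NormedAddCommGroup H] [InnerProductSpace ℝ H]
    {K : Set H} (hK : Convex ℝ K) {u v : H} (hv : v ∈ K)
    (hmin : ∀ g ∈ K, ‖u - v‖ ≤ ‖u - g‖) : ∀ w ∈ K, (⟪u - v, w - v⟫) ≤ 0 := by
  rw [← norm_eq_iInf_iff_real_inner_le_zero hK hv]
  haveI : Nonempty K := ⟨⟨v, hv⟩⟩
  refine le_antisymm (le_ciInf fun w => hmin w.1 w.2)
    (ciInf_le ⟨0, fun _ ⟨w, h⟩ => h ▸ norm_nonneg _⟩ (⟨v, hv⟩ : K))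

lemma dense_spanK {d : ℕ} (μ : Measure (Fin d → ℝ)) [IsProbabilityMeasure μ]
    (hsupp : μ (Set.Icc (0 : Fin d → ℝ) 1)ᶜ = 0) :
    Dense (Submodule.span ℝ {f : Lp ℝ 2 μ | ∃ g : (Fin d → ℝ) → ℝ,
      ConvexOn ℝ (Set.Icc (0 : Fin d → ℝ) 1) g ∧ ∀ᵐ x ∂μ, f x = g x} :
      Set (Lp ℝ 2 μ)) := by
  set KK : Set (Lp ℝ 2 μ) := {f : Lp ℝ 2 μ | ∃ g : (Fin d → ℝ) → ℝ,
      ConvexOn ℝ (Set.Icc (0 : Fin d → ℝ) 1) g ∧ ∀ᵐ x ∂μ, f x = g x} with hKK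
  have hIcc : Convex ℝ (Set.Icc (0 : Fin d → ℝ) 1) := convex_Icc _ _
  have hae : ∀ᵐ x ∂μ, x ∈ Set.Icc (0 : Fin d → ℝ) 1 := by
    rw [MeasureTheory.ae_iff]
    exact hsupp
  -- exponentials of linear maps are in L²
  have memLp_exp : ∀ c : Fin d → ℝ,
      MemLp (fun x : Fin d → ℝ => Real.exp (∑ i, c i * x i)) 2 μ := by
    intro c
    refine MemLp.of_bound ?_ (Real.exp (∑ i, |c i|)) ?_
    · exact (Real.continuous_exp.comp (continuous_finset_sum _ fun i _ =>
        continuous_const.mul (continuous_apply i))).aestronglyMeasurable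
    · filter_upwards [hae] with x hx
      rw [Real.norm_eq_abs, abs_of_pos (Real.exp_pos _)]
      refine Real.exp_le_exp.mpr (Finset.sum_le_sum fun i _ => ?_)
      have h0 : (0:ℝ) ≤ x i := by have := hx.1; exact this i
      have h1 : x i ≤ 1 := by have := hx.2; exact this i
      calc c i * x i ≤ |c i| * x i := mul_le_mul_of_nonneg_right (le_abs_self _) h0
        _ ≤ |c i| * 1 := mul_le_mul_of_nonneg_left h1 (abs_nonneg _)
        _ = |c i| := mul_one _
  haveI : CompactSpace (Set.Icc (0 : Fin d → ℝ) 1) :=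
    isCompact_iff_compactSpace.mp isCompact_Icc
  -- continuous exponential maps on Icc
  set X := Set.Icc (0 : Fin d → ℝ) 1 with hX
  let expC : (Fin d → ℝ) → C(X, ℝ) := fun c =>
    ⟨fun x => Real.exp (∑ i, c i * (x : Fin d → ℝ) i),
      Real.continuous_exp.comp ((continuous_finset_sum _ fun i _ =>
        continuous_const.mul (continuous_apply i)).comp continuous_subtype_val)⟩
  let Esub : Submonoid C(X, ℝ) :=
    { carrier := {h | ∃ c, h = expC c}
      one_mem' := ⟨0, by ext x; simp [expC]⟩
      mul_mem' := by
        rintro a b ⟨c, rfl⟩ ⟨c', rfl⟩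
        refine ⟨c + c', ?_⟩
        ext x
        simp only [expC, ContinuousMap.mul_apply, ContinuousMap.coe_mk, Pi.add_apply, add_mul,
          Finset.sum_add_distrib, Real.exp_add] }
  -- Stone-Weierstrass
  have hsep : (Algebra.adjoin ℝ (Esub : Set C(X, ℝ))).SeparatesPoints := by
    intro x y hxy
    obtain ⟨i, hi⟩ := Function.ne_iff.mp (fun h => hxy (Subtype.ext h))
    refine ⟨expC (Pi.single i 1), ⟨expC (Pi.single i 1),
      Algebra.subset_adjoin ⟨Pi.single i 1, rfl⟩, rfl⟩, ?_⟩
    have hxv : ∀ z : X, (expC (Pi.single i 1)) z = Real.exp ((z : Fin d → ℝ) i) := by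
      intro z
      simp only [expC, ContinuousMap.coe_mk]
      congr 1
      rw [Finset.sum_eq_single i]
      · simp
      · intro j _ hj; simp [Pi.single_apply, hj]
      · simp
    rw [hxv x, hxv y]
    exact fun h => hi (Real.exp_eq_exp.mp h)
  -- every element of the span of Esub has a global representative in span KK
  have hrep : ∀ p ∈ Submodule.span ℝ (Esub : Set C(X, ℝ)),
      ∃ (P : (Fin d → ℝ) → ℝ) (hm : MemLp P 2 μ),
        hm.toLp P ∈ Submodule.span ℝ KK ∧ ∀ x : X, P (x : Fin d → ℝ) = p x := by
    intro p hp
    induction hp using Submodule.span_induction with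
    | mem h hh =>
      obtain ⟨c, rfl⟩ := hh
      refine ⟨fun x => Real.exp (∑ i, c i * x i), memLp_exp c, ?_, fun x => rfl⟩
      refine Submodule.subset_span ?_
      exact ⟨fun x => Real.exp (∑ i, c i * x i), exp_lin_convexOn c hIcc,
        (memLp_exp c).coeFn_toLp⟩
    | zero =>
      refine ⟨fun _ => 0, memLp_const 0, ?_, fun x => rfl⟩
      have : (memLp_const (0:ℝ) : MemLp (fun _ : Fin d → ℝ => (0:ℝ)) 2 μ).toLp _ = 0 := rfl
      rw [this]; exact Submodule.zero_mem _
    | add p₁ p₂ hp₁ hp₂ ih₁ ih₂ =>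
      obtain ⟨P₁, hm₁, hs₁, he₁⟩ := ih₁
      obtain ⟨P₂, hm₂, hs₂, he₂⟩ := ih₂
      refine ⟨P₁ + P₂, hm₁.add hm₂, ?_, fun x => ?_⟩
      · have : (hm₁.add hm₂).toLp (P₁ + P₂) = hm₁.toLp P₁ + hm₂.toLp P₂ :=
          MemLp.toLp_add hm₁ hm₂
        rw [this]; exact Submodule.add_mem _ hs₁ hs₂
      · simp [Pi.add_apply, he₁ x, he₂ x]
    | smul r p₁ hp₁ ih =>
      obtain ⟨P₁, hm₁, hs₁, he₁⟩ := ih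
      refine ⟨r • P₁, hm₁.const_smul r, ?_, fun x => ?_⟩
      · have : (hm₁.const_smul r).toLp (r • P₁) = r • hm₁.toLp P₁ :=
          MemLp.toLp_const_smul r hm₁
        rw [this]; exact Submodule.smul_mem _ r hs₁
      · simp [Pi.smul_apply, smul_eq_mul, he₁ x]
  -- now prove density
  intro f
  rw [Metric.mem_closure_iff]
  intro ε hε
  -- approximate by a bounded continuous function
  have hbcf : Dense (Lp.boundedContinuousFunction ℝ 2 μ : Set (Lp ℝ 2 μ)) :=
    Lp.boundedContinuousFunction_dense ℝ μ (by norm_num)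
  obtain ⟨b, hb_mem, hdist1⟩ := Metric.mem_closure_iff.mp (hbcf f) (ε/2) (by positivity)
  obtain ⟨g, hg⟩ := Lp.mem_boundedContinuousFunction_iff.mp hb_mem
  have hbg : (b : (Fin d → ℝ) → ℝ) =ᵐ[μ] g := by
    have h1 : ((g.toContinuousMap.toAEEqFun μ : (Fin d → ℝ) →ₘ[μ] ℝ) : (Fin d → ℝ) → ℝ)
        =ᵐ[μ] g.toContinuousMap := ContinuousMap.coeFn_toAEEqFun μ g.toContinuousMap
    rw [hg] at h1
    exact h1
  -- Stone-Weierstrass approximation of g on X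
  obtain ⟨q, hq⟩ := ContinuousMap.exists_mem_subalgebra_near_continuousMap_of_separatesPoints
    (Algebra.adjoin ℝ (Esub : Set C(X, ℝ))) hsep (g.toContinuousMap.restrict X) (ε/4)
    (by positivity)
  have hq_span : (q : C(X, ℝ)) ∈ Submodule.span ℝ (Esub : Set C(X, ℝ)) := by
    have h1 := Algebra.adjoin_eq_span (R := ℝ) (s := (Esub : Set C(X, ℝ)))
    rw [Submonoid.closure_eq] at h1
    have h2 : (q : C(X, ℝ)) ∈ Subalgebra.toSubmodule (Algebra.adjoin ℝ (Esub : Set C(X, ℝ))) :=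
      q.2
    rw [h1] at h2
    exact h2
  obtain ⟨P, hm, hPspan, hPq⟩ := hrep _ hq_span
  refine ⟨hm.toLp P, hPspan, ?_⟩
  -- bound the distance
  have hdist2 : dist b (hm.toLp P) ≤ ε/2 := by
    rw [dist_eq_norm]
    have hbound : ∀ᵐ x ∂μ, ‖(b - hm.toLp P : Lp ℝ 2 μ) x‖ ≤ ε/4 := by
      filter_upwards [hae, hbg, hm.coeFn_toLp, Lp.coeFn_sub b (hm.toLp P)] with x hx h1 h2 h3
      rw [h3, Pi.sub_apply, h1, h2]
      have h4 : P x = (q : C(X, ℝ)) ⟨x, hx⟩ := hPq ⟨x, hx⟩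
      have h5 : g x = (g.toContinuousMap.restrict X) ⟨x, hx⟩ := rfl
      rw [h4, h5]
      have h6 := ContinuousMap.norm_coe_le_norm
        ((g.toContinuousMap.restrict X) - (q : C(X, ℝ))) ⟨x, hx⟩
      have h7 : ‖(g.toContinuousMap.restrict X) - (q : C(X, ℝ))‖ = ‖(q : C(X, ℝ)) - (g.toContinuousMap.restrict X)‖ := norm_sub_rev _ _
      calc ‖(g.toContinuousMap.restrict X) ⟨x, hx⟩ - (q : C(X, ℝ)) ⟨x, hx⟩‖
          ≤ ‖(g.toContinuousMap.restrict X) - (q : C(X, ℝ))‖ := h6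
        _ = ‖(q : C(X, ℝ)) - (g.toContinuousMap.restrict X)‖ := h7
        _ ≤ ε/4 := le_of_lt hq
    have := Lp.norm_le_of_ae_bound (f := b - hm.toLp P) (by positivity : (0:ℝ) ≤ ε/4) hbound
    have hμ1 : (measureUnivNNReal μ : ℝ) = 1 := by
      simp [measureUnivNNReal, measure_univ]
    rw [hμ1] at this
    simp only [Real.one_rpow] at this
    linarith
  calc dist f (hm.toLp P) ≤ dist f b + dist b (hm.toLp P) := dist_triangle _ _ _
    _ < ε := by linarith

/-- let `μ` be a Borel probability measure on `[0,1]^d` and `H = L²(μ)`.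
Let `K ⊆ H` be the set of functions agreeing `μ`-a.e. with a convex function on `[0,1]^d`
(so `−K` is the corresponding concave set), and `A ⊆ H` the set of functions agreeing
`μ`-a.e. with an affine function.  Assume `K` is closed.  If the metric projections `φI` of
`φ₀` onto `K` and `φD` of `φ₀` onto `−K` both lie in `A`, then `φ₀ ∈ A`. -/
theorem stmt9 {d : ℕ}
    (μ : Measure (Fin d → ℝ)) [IsProbabilityMeasure μ]
    (hsupp : μ (Set.Icc (0 : Fin d → ℝ) 1)ᶜ = 0)
    (K A : Set (Lp ℝ 2 μ))
    (hK : K = {f : Lp ℝ 2 μ | ∃ g : (Fin d → ℝ) → ℝ,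
      ConvexOn ℝ (Set.Icc (0 : Fin d → ℝ) 1) g ∧ ∀ᵐ x ∂μ, f x = g x})
    (hA : A = {f : Lp ℝ 2 μ | ∃ (a : ℝ) (b : Fin d → ℝ),
      ∀ᵐ x ∂μ, f x = a + ∑ i, b i * x i})
    (hKclosed : IsClosed K)
    (φ₀ φI φD : Lp ℝ 2 μ)
    (hφI : φI ∈ K ∧ ∀ g ∈ K, ‖φ₀ - φI‖ ≤ ‖φ₀ - g‖)
    (hφD : φD ∈ -K ∧ ∀ g ∈ -K, ‖φ₀ - φD‖ ≤ ‖φ₀ - g‖)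
    (hIA : φI ∈ A) (hDA : φD ∈ A) :
    φ₀ ∈ A := by
  have hIcc : Convex ℝ (Set.Icc (0 : Fin d → ℝ) 1) := convex_Icc _ _
  -- A ⊆ K
  have hAK : ∀ f, f ∈ A → f ∈ K := by
    rintro f hf
    rw [hA] at hf; rw [hK]
    obtain ⟨a, b, hab⟩ := hf
    exact ⟨_, aff_convexOn a b hIcc, hab⟩
  -- A is closed under negation
  have hAneg : ∀ f, f ∈ A → -f ∈ A := by
    rintro f hf
    rw [hA] at hf ⊢
    obtain ⟨a, b, hab⟩ := hf
    refine ⟨-a, -b, ?_⟩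
    filter_upwards [hab, Lp.coeFn_neg f] with x h1 h2
    rw [h2, Pi.neg_apply, h1]
    simp only [Pi.neg_apply, neg_mul, neg_add, ← Finset.sum_neg_distrib]
  -- A is closed under addition
  have hAadd : ∀ f g, f ∈ A → g ∈ A → f + g ∈ A := by
    rintro f g hf hg
    rw [hA] at hf hg ⊢
    obtain ⟨a, b, hab⟩ := hf
    obtain ⟨a', b', hab'⟩ := hg
    refine ⟨a + a', b + b', ?_⟩
    filter_upwards [hab, hab', Lp.coeFn_add f g] with x h1 h2 h3
    rw [h3, Pi.add_apply, h1, h2]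
    simp [Finset.sum_add_distrib, add_mul]
    ring
  -- K is closed under adding elements of A
  have hKaddA : ∀ f e, f ∈ K → e ∈ A → f + e ∈ K := by
    rintro f e hf he
    rw [hK] at hf ⊢; rw [hA] at he
    obtain ⟨g, hg, hfg⟩ := hf
    obtain ⟨a, b, hab⟩ := he
    refine ⟨g + fun x => a + ∑ i, b i * x i, hg.add (aff_convexOn a b hIcc), ?_⟩
    filter_upwards [hfg, hab, Lp.coeFn_add f e] with x h1 h2 h3
    rw [h3, Pi.add_apply, h1, h2]; rfl
  -- K is convex
  have hKconvex : Convex ℝ K := by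
    rintro f hf g hg p q hp hq hpq
    rw [hK] at hf hg ⊢
    obtain ⟨gf, hgf, hffg⟩ := hf
    obtain ⟨gg, hgg, hggg⟩ := hg
    refine ⟨p • gf + q • gg, (hgf.smul hp).add (hgg.smul hq), ?_⟩
    filter_upwards [hffg, hggg, Lp.coeFn_add (p • f) (q • g), Lp.coeFn_smul p f,
      Lp.coeFn_smul q g] with x h1 h2 h3 h4 h5
    rw [h3, Pi.add_apply, h4, h5, Pi.smul_apply, Pi.smul_apply, h1, h2]; rfl
  have hVI := var_ineq hKconvex hφI.1 hφI.2
  have hVD := var_ineq hKconvex.neg hφD.1 hφD.2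
  set u := φ₀ - φI with hu
  set v := φ₀ - φD with hv
  have huK : ∀ f ∈ K, (⟪u, f⟫) ≤ 0 := by
    intro f hf
    have h := hVI (f + φI) (hKaddA f φI hf hIA)
    simpa using h
  have hvK : ∀ f ∈ K, 0 ≤ (⟪v, f⟫) := by
    intro f hf
    have hmem : φD - f ∈ -K := by
      rw [Set.mem_neg]
      have : -(φD - f) = f + -φD := by abel
      rw [this]
      exact hKaddA f (-φD) hf (hAneg φD hDA)
    have h := hVD (φD - f) hmem
    have h2 : φD - f - φD = -f := by abel
    rw [h2, inner_neg_right] at h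
    linarith
  have huA : ∀ e ∈ A, (⟪u, e⟫) = 0 := by
    intro e he
    refine le_antisymm (huK e (hAK e he)) ?_
    have h := huK (-e) (hAK _ (hAneg e he))
    rw [inner_neg_right] at h; linarith
  have hvA : ∀ e ∈ A, (⟪v, e⟫) = 0 := by
    intro e he
    refine le_antisymm ?_ (hvK e (hAK e he))
    have h := hvK (-e) (hAK _ (hAneg e he))
    rw [inner_neg_right] at h; linarith
  -- φI = φD
  have hwA : φD - φI ∈ A := by
    have := hAadd φD (-φI) hDA (hAneg φI hIA)
    rwa [← sub_eq_add_neg] at this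
  have huv : u - v = φD - φI := by rw [hu, hv]; abel
  have hw0 : φD - φI = 0 := by
    have h1 : (⟪u - v, φD - φI⟫) = 0 := by
      rw [inner_sub_left, huA _ hwA, hvA _ hwA]; ring
    rw [huv] at h1
    exact inner_self_eq_zero.mp h1
  have hDI : φD = φI := sub_eq_zero.mp hw0
  have hK0 : ∀ f ∈ K, (⟪u, f⟫) = 0 := by
    intro f hf
    refine le_antisymm (huK f hf) ?_
    have := hvK f hf
    rwa [hv, hDI, ← hu] at this
  -- density : u = 0
  have hdense := dense_spanK μ hsupp
  rw [← hK] at hdense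
  have huspan : ∀ h ∈ Submodule.span ℝ K, (⟪u, h⟫) = 0 := by
    intro h hh
    have hle : Submodule.span ℝ K ≤ LinearMap.ker (innerSL ℝ u : Lp ℝ 2 μ →ₗ[ℝ] ℝ) := by
      rw [Submodule.span_le]
      intro f hf
      simp only [SetLike.mem_coe, LinearMap.mem_ker, ContinuousLinearMap.coe_coe, innerSL_apply_apply]
      exact hK0 f hf
    simpa using hle hh
  have hu0 : u = 0 := by
    have hclosed : IsClosed {h : Lp ℝ 2 μ | (⟪u, h⟫) = 0} :=
      isClosed_eq (innerSL ℝ u).continuous continuous_const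
    have hsub : closure (Submodule.span ℝ K : Set (Lp ℝ 2 μ)) ⊆ {h | (⟪u, h⟫) = 0} :=
      closure_minimal (fun h hh => huspan h hh) hclosed
    have : u ∈ closure (Submodule.span ℝ K : Set (Lp ℝ 2 μ)) := hdense u
    exact inner_self_eq_zero.mp (hsub this)
  have : φ₀ = φI := sub_eq_zero.mp hu0
  rw [this]; exact hIA
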